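/- Sharper alternative L-norm error bound: In the setting of the Aubin–Nitsche trick (L a real normed vector space, r_h : X_h → L linear, B the closed unit ball of continuous linear forms on L, u_h a solution of the discrete problem, I_h u ∈ X_h, for each g ∈ B an element J_g ∈ Y_h, dual consistency error D_g(x) = g(r_h x) − a_h(x, J_g), primal-dual consistency error E_h(u; J_g) = ℓ_h(J_g) − a_h(I_h u, J_g)), and assuming the suprema below are finite, it holds that ‖r_h(u_h − I_h u)‖_L ≤ sup_{g ∈ B} D_g(u_h − I_h u) + sup_{g ∈ B} E_h(u; J_g). -/

import Mathlib

/-- Sharper alternative `L`-norm error bound in the Aubin–Nitsche setting. -/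
theorem aubin_nitsche_sharper_estimate
    {X Y L : Type*} [NormedAddCommGroup X] [NormedSpace ℝ X]
    [NormedAddCommGroup Y] [NormedSpace ℝ Y]
    [NormedAddCommGroup L] [NormedSpace ℝ L]
    (a : X →ₗ[ℝ] Y →ₗ[ℝ] ℝ) (l : Y →ₗ[ℝ] ℝ)
    (r : X →ₗ[ℝ] L)
    (Ihu : X) (uh : X) (huh : ∀ v : Y, a uh v = l v)
    (J : (L →L[ℝ] ℝ) → Y)
    (D : (L →L[ℝ] ℝ) → (X →L[ℝ] ℝ))
    (hD : ∀ (g : L →L[ℝ] ℝ) (x : X), D g x = g (r x) - a x (J g))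
    (hbdd₁ : BddAbove
      (Set.range fun g : {g : L →L[ℝ] ℝ // ‖g‖ ≤ 1} => D g.1 (uh - Ihu)))
    (hbdd₂ : BddAbove
      (Set.range fun g : {g : L →L[ℝ] ℝ // ‖g‖ ≤ 1} => l (J g.1) - a Ihu (J g.1))) :
    ‖r (uh - Ihu)‖ ≤
      (⨆ g : {g : L →L[ℝ] ℝ // ‖g‖ ≤ 1}, D g.1 (uh - Ihu))
        + ⨆ g : {g : L →L[ℝ] ℝ // ‖g‖ ≤ 1}, (l (J g.1) - a Ihu (J g.1)) := by
  set w := uh - Ihu with hw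
  -- key pointwise identity: g (r w) = D g w + (l (J g) - a Ihu (J g))
  have key : ∀ g : L →L[ℝ] ℝ, g (r w) = D g w + (l (J g) - a Ihu (J g)) := by
    intro g
    have h1 : a w (J g) = l (J g) - a Ihu (J g) := by
      simp [hw, map_sub, ← huh (J g)]
    rw [hD g w, h1]; ring
  have bound : ∀ g : L →L[ℝ] ℝ, ‖g‖ ≤ 1 →
      g (r w) ≤ (⨆ g : {g : L →L[ℝ] ℝ // ‖g‖ ≤ 1}, D g.1 w)
        + ⨆ g : {g : L →L[ℝ] ℝ // ‖g‖ ≤ 1}, (l (J g.1) - a Ihu (J g.1)) := by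
    intro g hg
    rw [key g]
    exact add_le_add
      (le_ciSup hbdd₁ (⟨g, hg⟩ : {g : L →L[ℝ] ℝ // ‖g‖ ≤ 1}))
      (le_ciSup hbdd₂ (⟨g, hg⟩ : {g : L →L[ℝ] ℝ // ‖g‖ ≤ 1}))
  by_cases hz : r w = 0
  · rw [hz, norm_zero]
    have := bound 0 (by simp)
    simpa using this
  · obtain ⟨g, hg1, hgw⟩ := exists_dual_vector ℝ (r w) (norm_ne_zero_iff.mpr hz)
    have : ‖r w‖ = g (r w) := by
      have := hgw
      simpa [RCLike.ofReal_real_eq_id] using this.symm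
    rw [this]
    exact bound g (le_of_eq hg1)
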